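/- Suppose l ≥ 1 and s1 ≥ 1 are integers, with 1 ≤ s1 ≤ s2 ≤ ... ≤ sl. Let K denote the complete (l+1)-partite graph with colour classes C0, C1, ..., Cl of sizes 1, s1, ..., sl respectively. If V1, ..., Vl is a partition of the vertex set of K such that every vertex has at most s1 − 1 neighbours in its own part, then some part Vj contains a triangle (three mutually adjacent vertices). -/

import Mathlib

theorem stmt_4 {l : ℕ} (hl : 1 ≤ l) (s : Fin l → ℕ)
    (hpos : ∀ i, 1 ≤ s i) (hmono : Monotone s)
    {V : Type*} [Fintype V] (c : V → Fin (l + 1))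
    (h0 : {v | c v = 0}.ncard = 1)
    (hsize : ∀ i : Fin l, {v | c v = i.succ}.ncard = s i)
    (K : SimpleGraph V) (hK : ∀ a b, K.Adj a b ↔ c a ≠ c b)
    (π : V → Fin l)
    (hdeg : ∀ v, {w | K.Adj v w ∧ π w = π v}.ncard ≤ s ⟨0, hl⟩ - 1) :
    ∃ (j : Fin l) (a b c' : V), π a = j ∧ π b = j ∧ π c' = j ∧
      K.Adj a b ∧ K.Adj b c' ∧ K.Adj a c' := by
  classical
  by_contra hcon
  push_neg at hcon
  set s1 := s ⟨0, hl⟩ with hs1def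
  have hs1pos : 1 ≤ s1 := hpos _
  set P : Fin l → Finset V := fun j => Finset.univ.filter fun v => π v = j with hP
  set Cc : Fin (l+1) → Finset V := fun t => Finset.univ.filter fun v => c v = t with hCcdef
  set col : Fin l → Finset (Fin (l+1)) := fun j => (P j).image c with hcoldef
  -- cardinality conversions
  have hC0 : (Cc 0).card = 1 := by
    have he : {v | c v = 0} = ↑(Cc 0) := by ext v; simp [Cc]
    rw [he, Set.ncard_coe_finset] at h0; exact h0
  have hCs : ∀ i : Fin l, (Cc i.succ).card = s i := by
    intro i
    have he : {v | c v = i.succ} = ↑(Cc i.succ) := by ext v; simp [Cc]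
    have := hsize i
    rwa [he, Set.ncard_coe_finset] at this
  have hdeg' : ∀ v, (Finset.univ.filter fun w => K.Adj v w ∧ π w = π v).card ≤ s1 - 1 := by
    intro v
    have he : {w | K.Adj v w ∧ π w = π v}
        = ↑(Finset.univ.filter fun w => K.Adj v w ∧ π w = π v) := by ext w; simp
    have := hdeg v
    rwa [he, Set.ncard_coe_finset] at this
  -- each part meets at most two colour classes
  have hcol2 : ∀ j, (col j).card ≤ 2 := by
    intro j
    by_contra hgt
    push_neg at hgt
    obtain ⟨t1, ht1, t2, ht2, t3, ht3, h12, h13, h23⟩ := Finset.two_lt_card.mp hgt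
    obtain ⟨a, ha, hca⟩ := Finset.mem_image.mp ht1
    obtain ⟨b, hb, hcb⟩ := Finset.mem_image.mp ht2
    obtain ⟨d, hd, hcd⟩ := Finset.mem_image.mp ht3
    simp only [hP, Finset.mem_filter] at ha hb hd
    exact hcon j a b d ha.2 hb.2 hd.2
      ((hK a b).mpr (by rw [hca, hcb]; exact h12))
      ((hK b d).mpr (by rw [hcb, hcd]; exact h23))
      ((hK a d).mpr (by rw [hca, hcd]; exact h13))
  -- a mixed part contributes at most s1 - 1 vertices to each class
  have hmix : ∀ j t, 2 ≤ (col j).card → t ∈ col j → (Cc t ∩ P j).card ≤ s1 - 1 := by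
    intro j t h2 ht
    obtain ⟨t', ht', htt'⟩ := Finset.exists_mem_ne (s := col j) (by omega) t
    obtain ⟨w, hw, hcw⟩ := Finset.mem_image.mp ht'
    simp only [hP, Finset.mem_filter] at hw
    have hsub : Cc t ∩ P j ⊆ Finset.univ.filter fun x => K.Adj w x ∧ π x = π w := by
      intro v hv
      simp only [hCcdef, hP, Finset.mem_inter, Finset.mem_filter] at hv
      simp only [Finset.mem_filter, Finset.mem_univ, true_and]
      refine ⟨(hK w v).mpr ?_, by rw [hv.2.2, hw.2]⟩
      rw [hcw, hv.1.2]; exact htt'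
    exact le_trans (Finset.card_le_card hsub) (hdeg' w)
  set M : Finset (Fin l) := Finset.univ.filter fun j => 2 ≤ (col j).card with hMdef
  set d : Fin (l+1) → ℕ := fun t => (M.filter fun j => t ∈ col j).card with hddef
  -- a light class (no pure part) is covered by mixed parts
  have hlightcov : ∀ t, (∀ j, col j ≠ {t}) → (Cc t).card ≤ d t * (s1 - 1) := by
    intro t hlight
    have hsub : Cc t ⊆ (M.filter fun j => t ∈ col j).biUnion fun j => Cc t ∩ P j := by
      intro v hv
      have hvc : c v = t := by
        simpa only [hCcdef, Finset.mem_filter, Finset.mem_univ, true_and] using hv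
      have hvP : v ∈ P (π v) := by simp [hP]
      have htcol : t ∈ col (π v) := Finset.mem_image.mpr ⟨v, hvP, hvc⟩
      have h2 : 2 ≤ (col (π v)).card := by
        by_contra hle
        push_neg at hle
        have : col (π v) = {t} := by
          apply Finset.eq_singleton_iff_unique_mem.mpr
          refine ⟨htcol, fun x hx => ?_⟩
          have := Finset.card_le_one.mp (by omega) x hx t htcol
          exact this
        exact hlight _ this
      refine Finset.mem_biUnion.mpr ⟨π v, ?_, ?_⟩
      · simp only [hMdef, Finset.mem_filter, Finset.mem_univ, true_and]
        exact ⟨h2, htcol⟩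
      · exact Finset.mem_inter.mpr ⟨hv, hvP⟩
    calc (Cc t).card ≤ ((M.filter fun j => t ∈ col j).biUnion fun j => Cc t ∩ P j).card :=
          Finset.card_le_card hsub
      _ ≤ ∑ j ∈ M.filter fun j => t ∈ col j, (Cc t ∩ P j).card := Finset.card_biUnion_le
      _ ≤ ∑ j ∈ M.filter fun j => t ∈ col j, (s1 - 1) := by
          apply Finset.sum_le_sum
          intro j hj
          simp only [Finset.mem_filter, hMdef, Finset.mem_univ, true_and] at hj
          exact hmix j t hj.1 hj.2
      _ = d t * (s1 - 1) := by rw [Finset.sum_const, smul_eq_mul]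
  -- bounds on d for light classes
  have hd0 : (∀ j, col j ≠ {0}) → 1 ≤ d 0 := by
    intro hlight
    have := hlightcov 0 hlight
    rw [hC0] at this
    by_contra h
    push_neg at h
    have hz : d 0 = 0 := by omega
    rw [hz, Nat.zero_mul] at this
    omega
  have hdsucc : ∀ i : Fin l, (∀ j, col j ≠ {i.succ}) → 2 ≤ d i.succ := by
    intro i hlight
    have hc := hlightcov i.succ hlight
    rw [hCs i] at hc
    have hs1i : s1 ≤ s i := hmono (by simp [Fin.le_def])
    by_contra h
    push_neg at h
    have : d i.succ * (s1 - 1) ≤ 1 * (s1 - 1) :=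
      Nat.mul_le_mul_right _ (by omega)
    omega
  -- double counting: total mixed incidences
  have hsum : ∑ t : Fin (l+1), d t = 2 * M.card := by
    have h1 : ∀ t, d t = ∑ j ∈ M, if t ∈ col j then 1 else 0 := by
      intro t; rw [hddef]; exact Finset.card_filter _ _
    calc ∑ t : Fin (l+1), d t
        = ∑ t : Fin (l+1), ∑ j ∈ M, if t ∈ col j then 1 else 0 := by
          exact Finset.sum_congr rfl fun t _ => h1 t
      _ = ∑ j ∈ M, ∑ t : Fin (l+1), if t ∈ col j then 1 else 0 := Finset.sum_comm
      _ = ∑ j ∈ M, (col j).card := by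
          apply Finset.sum_congr rfl
          intro j _
          rw [← Finset.card_filter, Finset.filter_univ_mem]
      _ = ∑ j ∈ M, 2 := by
          apply Finset.sum_congr rfl
          intro j hj
          simp only [hMdef, Finset.mem_filter, Finset.mem_univ, true_and] at hj
          exact le_antisymm (hcol2 j) hj
      _ = 2 * M.card := by rw [Finset.sum_const, smul_eq_mul, Nat.mul_comm]
  -- heavy classes injection into pure parts
  set H : Finset (Fin (l+1)) := Finset.univ.filter fun t => ∃ j, col j = {t} with hHdef
  set f : Fin (l+1) → Fin l := fun t =>
    if h : ∃ j, col j = {t} then h.choose else ⟨0, hl⟩ with hfdef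
  have hfspec : ∀ t ∈ H, col (f t) = {t} := by
    intro t ht
    have hex : ∃ j, col j = {t} := by
      simpa only [hHdef, Finset.mem_filter, Finset.mem_univ, true_and] using ht
    simp only [hfdef, dif_pos hex]
    exact hex.choose_spec
  have hHM : H.card + M.card ≤ l := by
    have hcard : H.card ≤ (Finset.univ \ M).card := by
      apply Finset.card_le_card_of_injOn f
      · intro t ht
        rw [Finset.mem_coe, Finset.mem_sdiff]
        refine ⟨Finset.mem_univ _, ?_⟩
        simp only [hMdef, Finset.mem_filter, Finset.mem_univ, true_and, not_le]
        rw [hfspec t ht, Finset.card_singleton]; omega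
      · intro t1 h1 t2 h2 hf
        have e1 := hfspec t1 h1
        have e2 := hfspec t2 h2
        rw [hf, e2] at e1
        exact (Finset.singleton_inj.mp e1).symm
    have : (Finset.univ \ M).card = l - M.card := by
      rw [Finset.card_sdiff_of_subset (Finset.subset_univ M), Finset.card_univ, Fintype.card_fin]
    have hMl : M.card ≤ l := by
      have := Finset.card_le_univ M
      simpa [Fintype.card_fin] using this
    omega
  -- the light classes
  set L : Finset (Fin (l+1)) := Finset.univ.filter fun t => ¬ ∃ j, col j = {t} with hLdef
  have hLcard : L.card = l + 1 - H.card := by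
    have : L = Finset.univ \ H := by
      rw [hLdef, hHdef, Finset.filter_not]
    rw [this, Finset.card_sdiff_of_subset (Finset.subset_univ H), Finset.card_univ, Fintype.card_fin]
  have hLge : M.card + 1 ≤ L.card := by omega
  have hLlight : ∀ t ∈ L, ∀ j, col j ≠ {t} := by
    intro t ht
    have := Finset.mem_filter.mp ht
    push_neg at this
    exact this.2
  -- sum over light classes is at most the total
  have hsumL : ∑ t ∈ L, d t ≤ 2 * M.card := by
    rw [← hsum]
    exact Finset.sum_le_sum_of_subset (Finset.subset_univ L)
  -- final contradiction
  by_cases h0L : (0 : Fin (l+1)) ∈ L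
  · have hrest : ∀ t ∈ L.erase 0, 2 ≤ d t := by
      intro t ht
      have htL := Finset.mem_of_mem_erase ht
      have htne := Finset.ne_of_mem_erase ht
      rcases Fin.eq_zero_or_eq_succ t with rfl | ⟨i, rfl⟩
      · exact absurd rfl htne
      · exact hdsucc i (hLlight _ htL)
    have hlow : (L.erase 0).card * 2 ≤ ∑ t ∈ L.erase 0, d t :=
      Finset.card_nsmul_le_sum _ _ _ hrest
    have hsplit : d 0 + ∑ t ∈ L.erase 0, d t = ∑ t ∈ L, d t :=
      Finset.add_sum_erase _ _ h0L
    have hd0' : 1 ≤ d 0 := hd0 (hLlight _ h0L)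
    have hec : (L.erase 0).card = L.card - 1 := Finset.card_erase_of_mem h0L
    omega
  · have hrest : ∀ t ∈ L, 2 ≤ d t := by
      intro t ht
      rcases Fin.eq_zero_or_eq_succ t with rfl | ⟨i, rfl⟩
      · exact absurd ht h0L
      · exact hdsucc i (hLlight _ ht)
    have hlow : L.card * 2 ≤ ∑ t ∈ L, d t :=
      Finset.card_nsmul_le_sum _ _ _ hrest
    omega
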